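/- Let G₁ and G₂ be finite groups and let π : G₁ → G₂ be a surjective group homomorphism. Let H₁ ⊆ G₁ and H₂ ⊆ G₂ be subgroups satisfying π(H₁) = H₂, and let N₁ ⊴ G₁ and N₂ ⊴ G₂ be normal subgroups satisfying π(N₁) = N₂. Assume that gcd(#N₁, #ker π) = 1 and that every element of N₁ commutes with every element of ker π, i.e. [N₁, ker π] = {1}. Then N₁ ⊆ H₁ if and only if N₂ ⊆ H₂. -/
import Mathlib


/-- Let `G₁, G₂` be finite groups, `π : G₁ → G₂` a surjective homomorphism,
`H₁ ⊆ G₁`, `H₂ ⊆ G₂` subgroups with `π(H₁) = H₂`, and `N₁ ⊴ G₁`, `N₂ ⊴ G₂`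
normal subgroups with `π(N₁) = N₂`.  If `gcd(#N₁, #ker π) = 1` and
`[N₁, ker π] = {1}`, then `N₁ ⊆ H₁ ↔ N₂ ⊆ H₂`. -/
theorem statement7 {G₁ G₂ : Type*} [Group G₁] [Group G₂] [Finite G₁] [Finite G₂]
    (π : G₁ →* G₂) (hπ : Function.Surjective π)
    (H₁ : Subgroup G₁) (H₂ : Subgroup G₂) (hH : Subgroup.map π H₁ = H₂)
    (N₁ : Subgroup G₁) (N₂ : Subgroup G₂) [N₁.Normal] [N₂.Normal]
    (hN : Subgroup.map π N₁ = N₂)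
    (hcop : Nat.Coprime (Nat.card N₁) (Nat.card π.ker))
    (hcomm : ∀ a ∈ N₁, ∀ b ∈ π.ker, a * b = b * a) :
    N₁ ≤ H₁ ↔ N₂ ≤ H₂ := by
  subst hH hN
  constructor
  · exact fun h => Subgroup.map_mono h
  · intro hle n hn
    set k := Nat.card π.ker with hk
    obtain ⟨m, hm⟩ := (powCoprime (G := N₁) hcop).surjective ⟨n, hn⟩
    have hmk : (m : G₁) ^ k = n := by
      have := congrArg (Subtype.val) hm
      simpa [powCoprime] using this
    have hπm : π m ∈ Subgroup.map π H₁ := hle ⟨m, m.2, rfl⟩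
    obtain ⟨h₁, hh₁, hπh₁⟩ := hπm
    set b := (m : G₁)⁻¹ * h₁ with hb
    have hbker : b ∈ π.ker := by
      simp [hb, MonoidHom.mem_ker, hπh₁]
    have hcom : Commute (m : G₁) b := hcomm m m.2 b hbker
    have hbk : b ^ k = 1 := by
      have : (⟨b, hbker⟩ : π.ker) ^ k = 1 := pow_card_eq_one'
      exact congrArg Subtype.val this
    have : h₁ ^ k = n := by
      have : h₁ = (m : G₁) * b := by simp [hb]
      rw [this, hcom.mul_pow, hbk, mul_one, hmk]
    exact this ▸ pow_mem hh₁ k
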